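/- Let f : ℝ^d → ℝ be a convex function of the form f = c ∘ P + ℓ, where P : ℝ^d → ℝ^k is a linear projection with k < d, c : ℝ^k → ℝ is convex, and ℓ : ℝ^d → ℝ is linear. If g : ℝ^d → ℝ is any convex function such that |f(x) − g(x)| → 0 as |x| → ∞ along every line x + tv with v ∈ Ker P, v ≠ 0, then f = g. -/

import Mathlib

open Filter

lemma aux_anti (φ : ℝ → ℝ) (hφ : ConvexOn ℝ Set.univ φ)
    (hlim : Tendsto φ atTop (nhds 0)) {s b : ℝ} (hsb : s < b) : φ b ≤ φ s := by
  have key : ∀ T, b < T → φ b ≤ ((T-b)/(T-s)) * φ s + ((b-s)/(T-s)) * φ T := by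
    intro T hT
    have hTs : (0:ℝ) < T - s := by linarith
    have h1 : (0:ℝ) ≤ (T-b)/(T-s) := div_nonneg (by linarith) hTs.le
    have h2 : (0:ℝ) ≤ (b-s)/(T-s) := div_nonneg (by linarith) hTs.le
    have hsum : (T-b)/(T-s) + (b-s)/(T-s) = 1 := by
      rw [← add_div, div_eq_one_iff_eq hTs.ne']; ring
    have := hφ.2 (Set.mem_univ s) (Set.mem_univ T) h1 h2 hsum
    have hcomb : ((T-b)/(T-s)) • s + ((b-s)/(T-s)) • T = b := by
      simp only [smul_eq_mul]
      rw [div_mul_eq_mul_div, div_mul_eq_mul_div, ← add_div, div_eq_iff hTs.ne']; ring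
    rw [hcomb] at this
    simpa using this
  have hlim2 : Tendsto (fun T => ((T-b)/(T-s)) * φ s + ((b-s)/(T-s)) * φ T)
      atTop (nhds (φ s)) := by
    have ht1 : Tendsto (fun T : ℝ => (T-b)/(T-s)) atTop (nhds 1) := by
      have h := Filter.Tendsto.div_atTop (f := fun T : ℝ => s - b)
        tendsto_const_nhds (by simpa using tendsto_atTop_add_const_right atTop (-s) tendsto_id)
      have : Tendsto (fun T : ℝ => 1 + (s-b)/(T-s)) atTop (nhds 1) := by
        simpa [sub_eq_add_neg] using tendsto_const_nhds.add h
      refine this.congr' ?_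
      filter_upwards [eventually_gt_atTop s] with T hT
      have : T - s ≠ 0 := by linarith
      field_simp
      ring
    have ht2 : Tendsto (fun T : ℝ => (b-s)/(T-s)) atTop (nhds 0) :=
      Filter.Tendsto.div_atTop tendsto_const_nhds
        (by simpa [sub_eq_add_neg] using tendsto_atTop_add_const_right atTop (-s) tendsto_id)
    have := (ht1.mul (tendsto_const_nhds (x := φ s))).add (ht2.mul hlim)
    simpa using this
  exact ge_of_tendsto hlim2 (by filter_upwards [eventually_gt_atTop b] with T hT using key T hT)

lemma aux_zero (φ : ℝ → ℝ) (hφ : ConvexOn ℝ Set.univ φ)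
    (htop : Tendsto φ atTop (nhds 0)) (hbot : Tendsto φ atBot (nhds 0)) :
    ∀ t, φ t = 0 := by
  intro t
  have hub : φ t ≤ 0 := by
    refine ge_of_tendsto hbot ?_
    filter_upwards [eventually_lt_atBot t] with a ha using aux_anti φ hφ htop ha
  have hlb : 0 ≤ φ t := by
    refine le_of_tendsto htop ?_
    filter_upwards [eventually_gt_atTop t] with b hb using aux_anti φ hφ htop hb
  linarith

lemma aux_main (d k : ℕ) (hk : k < d)
    (P : (Fin d → ℝ) →ₗ[ℝ] (Fin k → ℝ)) :
    ∃ v ∈ LinearMap.ker P, v ≠ 0 := by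
  by_contra h
  push_neg at h
  have hker : LinearMap.ker P = ⊥ := by
    rw [Submodule.eq_bot_iff]
    exact h
  have hinj : Function.Injective P := LinearMap.ker_eq_bot.mp hker
  have := LinearMap.finrank_le_finrank_of_injective hinj
  simp [Module.finrank_fintype_fun_eq_card] at this
  omega

/-- If `f = c ∘ P + ℓ` with `P` a linear projection with nontrivial kernel,
and a convex `g` satisfies `|f - g| → 0` along every line in a kernel
direction, then `f = g`. -/
theorem convex_approx_along_kernel_lines_eq (d k : ℕ) (hk : k < d)
    (P : (Fin d → ℝ) →ₗ[ℝ] (Fin k → ℝ)) (hP : Function.Surjective P)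
    (c : (Fin k → ℝ) → ℝ) (hc : ConvexOn ℝ Set.univ c)
    (ℓ : (Fin d → ℝ) →ₗ[ℝ] ℝ)
    (f : (Fin d → ℝ) → ℝ) (hf : ∀ x, f x = c (P x) + ℓ x)
    (g : (Fin d → ℝ) → ℝ) (hg : ConvexOn ℝ Set.univ g)
    (happrox : ∀ (x : Fin d → ℝ), ∀ v ∈ LinearMap.ker P, v ≠ 0 →
      Tendsto (fun t : ℝ => |f (x + t • v) - g (x + t • v)|)
        (Filter.cocompact ℝ) (nhds 0)) :
    f = g := by
  obtain ⟨v, hvmem, hvne⟩ := aux_main d k hk P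
  have hPv : P v = 0 := hvmem
  funext x
  -- f is affine along the line
  have hfline : ∀ t : ℝ, f (x + t • v) = c (P x) + ℓ x + t * ℓ v := by
    intro t
    rw [hf]
    have : P (x + t • v) = P x := by
      rw [map_add, map_smul, hPv, smul_zero, add_zero]
    rw [this, map_add, map_smul]
    simp [smul_eq_mul]
    ring
  set φ : ℝ → ℝ := fun t => g (x + t • v) - f (x + t • v) with hφdef
  have hφline : ∀ t : ℝ, φ t = g (x + t • v) - (c (P x) + ℓ x + t * ℓ v) := by
    intro t; rw [hφdef]; simp [hfline t]
  -- φ is convex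
  have hφconv : ConvexOn ℝ Set.univ φ := by
    refine ⟨convex_univ, ?_⟩
    intro u _ w _ a b ha hb hab
    have hb' : b = 1 - a := by linarith
    have hpt : x + (a • u + b • w) • v = a • (x + u • v) + b • (x + w • v) := by
      subst hb'; simp only [smul_eq_mul]; module
    rw [hφline, hφline, hφline, hpt]
    have hgle := hg.2 (Set.mem_univ (x + u • v)) (Set.mem_univ (x + w • v)) ha hb hab
    have hexp : a * (g (x + u • v) - (c (P x) + ℓ x + u * ℓ v))
        + b * (g (x + w • v) - (c (P x) + ℓ x + w * ℓ v))
        = a * g (x + u • v) + b * g (x + w • v)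
          - (c (P x) + ℓ x + (a * u + b * w) * ℓ v) := by
      linear_combination (-(c (P x) + ℓ x)) * hab
    simp only [smul_eq_mul]
    rw [hexp]
    simp only [smul_eq_mul] at hgle
    linarith [hgle]
  -- φ tends to 0 at both ends
  have hφlim : Tendsto φ (Filter.cocompact ℝ) (nhds 0) := by
    have h1 := happrox x v hvmem hvne
    have h2 : Tendsto (fun t : ℝ => f (x + t • v) - g (x + t • v))
        (Filter.cocompact ℝ) (nhds 0) := by
      rwa [tendsto_zero_iff_abs_tendsto_zero]
    have := h2.neg
    simpa [hφdef, neg_sub] using this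
  rw [cocompact_eq_atBot_atTop, tendsto_sup] at hφlim
  have := aux_zero φ hφconv hφlim.2 hφlim.1 0
  have h0 : x + (0:ℝ) • v = x := by simp
  rw [hφdef] at this
  simp only [h0] at this
  linarith [this]
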